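/- Let G1 and G2 be groups with finite generating sets S1 and S2, let H be a group with finite generating set S_H, and let ι1 : H → G1 and ι2 : H → G2 be injective homomorphisms with ι1(S_H) ⊆ S1 and ι2(S_H) ⊆ S2. Let G = G1 *_H G2 be the amalgamated free product (the pushout of ι1 and ι2), identify G1 and G2 with their images in G, and let T be the image of S1 ∪ S2 in G, a finite generating set of G. Suppose there is a positive integer M such that |h|_{S_H} ≤ M·|ι1(h)|_T for every h ∈ H. Then there is a constant M' such that |g|_{S1} ≤ M'·|g|_T for every g ∈ G1; in particular G1 is undistorted in G. -/

import Mathlib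

open Monoid

/-- The word length of `g` with respect to a (symmetrized) generating set `S`. -/
noncomputable def wordLength {G : Type*} [Group G] (S : Set G) (g : G) : ℕ :=
  sInf {n | ∃ l : List G, l.length = n ∧ (∀ x ∈ l, x ∈ S ∨ x⁻¹ ∈ S) ∧ l.prod = g}

/-- The normal subgroup of the coproduct `G₁ ∗ G₂` generated by the amalgamation relations
`ι₁(h) = ι₂(h)` for `h ∈ H`. -/
def amalgamKer {G1 G2 H : Type*} [Group G1] [Group G2] [Group H]
    (ι1 : H →* G1) (ι2 : H →* G2) : Subgroup (Coprod G1 G2) :=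
  Subgroup.normalClosure {x | ∃ h : H, x = Coprod.inl (ι1 h) * (Coprod.inr (ι2 h))⁻¹}

instance amalgamKer_normal {G1 G2 H : Type*} [Group G1] [Group G2] [Group H]
    (ι1 : H →* G1) (ι2 : H →* G2) : (amalgamKer ι1 ι2).Normal :=
  Subgroup.normalClosure_normal

/-- The amalgamated free product `G₁ *_H G₂`, the pushout of `ι₁ : H →* G₁` and
`ι₂ : H →* G₂`, realized as the quotient of the coproduct `G₁ ∗ G₂` by the amalgamation
relations. -/
abbrev AmalgamatedProduct {G1 G2 H : Type*} [Group G1] [Group G2] [Group H]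
    (ι1 : H →* G1) (ι2 : H →* G2) : Type _ :=
  Coprod G1 G2 ⧸ amalgamKer ι1 ι2

/-- The natural map `G₁ →* G₁ *_H G₂`. -/
def AmalgamatedProduct.j1 {G1 G2 H : Type*} [Group G1] [Group G2] [Group H]
    (ι1 : H →* G1) (ι2 : H →* G2) : G1 →* AmalgamatedProduct ι1 ι2 :=
  (QuotientGroup.mk' (amalgamKer ι1 ι2)).comp Coprod.inl

/-- The natural map `G₂ →* G₁ *_H G₂`. -/
def AmalgamatedProduct.j2 {G1 G2 H : Type*} [Group G1] [Group G2] [Group H]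
    (ι1 : H →* G1) (ι2 : H →* G2) : G2 →* AmalgamatedProduct ι1 ι2 :=
  (QuotientGroup.mk' (amalgamKer ι1 ι2)).comp Coprod.inr

/-! ### Auxiliary material -/

section Aux

/-- A minimal-length word witnessing `wordLength`. -/
theorem exists_min_word {G : Type*} [Group G] {S : Set G}
    (hgen : Subgroup.closure S = ⊤) (g : G) :
    ∃ l : List G, l.length = wordLength S g ∧ (∀ x ∈ l, x ∈ S ∨ x⁻¹ ∈ S) ∧ l.prod = g := by
  have hmem : g ∈ Subgroup.closure S := hgen ▸ Subgroup.mem_top g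
  rw [← Subgroup.mem_toSubmonoid, Subgroup.closure_toSubmonoid] at hmem
  obtain ⟨l, h1, h2⟩ := Submonoid.exists_list_of_mem_closure hmem
  have hne : {n | ∃ l : List G, l.length = n ∧ (∀ x ∈ l, x ∈ S ∨ x⁻¹ ∈ S) ∧ l.prod = g}.Nonempty :=
    ⟨l.length, l, rfl, fun x hx => (h1 x hx).imp id Set.mem_inv.mp, h2⟩
  exact Nat.sInf_mem hne

theorem wordLength_le_length {G : Type*} [Group G] {S : Set G} {l : List G} {g : G}
    (hx : ∀ x ∈ l, x ∈ S ∨ x⁻¹ ∈ S) (hp : l.prod = g) :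
    wordLength S g ≤ l.length :=
  Nat.sInf_le ⟨l, rfl, hx, hp⟩

universe u1 u2 u3

variable {G1 : Type u1} {G2 : Type u2} {H : Type u3} [Group G1] [Group G2] [Group H]

/-- A `Bool`-indexed family consisting of (lifts of) `G1` and `G2`. -/
abbrev AmalgamFam (G1 : Type u1) (G2 : Type u2) : Bool → Type (max u1 u2) :=
  fun b => Bool.rec (ULift.{u1} G2) (ULift.{u2} G1) b

instance amalgamFamGroup : ∀ b, Group (AmalgamFam G1 G2 b) := fun b =>
  Bool.rec (motive := fun b => Group (AmalgamFam G1 G2 b)) inferInstance inferInstance b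

variable (ι1 : H →* G1) (ι2 : H →* G2)

/-- The family of maps from `H`. -/
def amalgamFamHom : ∀ b : Bool, H →* AmalgamFam G1 G2 b := fun b =>
  Bool.rec (motive := fun b => H →* AmalgamFam G1 G2 b)
    ((MulEquiv.ulift.symm : G2 ≃* ULift G2).toMonoidHom.comp ι2)
    ((MulEquiv.ulift.symm : G1 ≃* ULift G1).toMonoidHom.comp ι1) b

theorem amalgamFamHom_injective (hι1 : Function.Injective ι1) (hι2 : Function.Injective ι2) :
    ∀ b, Function.Injective (amalgamFamHom ι1 ι2 b) := by
  intro b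
  cases b
  · exact (MulEquiv.ulift.symm : G2 ≃* ULift G2).injective.comp hι2
  · exact (MulEquiv.ulift.symm : G1 ≃* ULift G1).injective.comp hι1

/-- The comparison map into Mathlib's pushout. -/
def amalgamToPushout : AmalgamatedProduct ι1 ι2 →* PushoutI (amalgamFamHom ι1 ι2) :=
  QuotientGroup.lift (amalgamKer ι1 ι2)
    (Coprod.lift
      ((PushoutI.of (φ := amalgamFamHom ι1 ι2) true).comp
        (MulEquiv.ulift.symm : G1 ≃* ULift G1).toMonoidHom)
      ((PushoutI.of (φ := amalgamFamHom ι1 ι2) false).comp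
        (MulEquiv.ulift.symm : G2 ≃* ULift G2).toMonoidHom))
    (by
      intro x hx
      refine Subgroup.normalClosure_le_normal ?_ hx
      rintro y ⟨h, rfl⟩
      simp only [SetLike.mem_coe, MonoidHom.mem_ker, map_mul, map_inv,
        Coprod.lift_apply_inl, Coprod.lift_apply_inr, MonoidHom.coe_comp, Function.comp_apply]
      have h1 := PushoutI.of_apply_eq_base (amalgamFamHom ι1 ι2) true h
      have h2 := PushoutI.of_apply_eq_base (amalgamFamHom ι1 ι2) false h
      rw [show ((MulEquiv.ulift.symm : G1 ≃* ULift G1).toMonoidHom (ι1 h)) =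
            amalgamFamHom ι1 ι2 true h from rfl,
          show ((MulEquiv.ulift.symm : G2 ≃* ULift G2).toMonoidHom (ι2 h)) =
            amalgamFamHom ι1 ι2 false h from rfl, h1, h2, mul_inv_cancel])

theorem amalgamToPushout_j1 (a : G1) :
    amalgamToPushout ι1 ι2 (AmalgamatedProduct.j1 ι1 ι2 a) =
      PushoutI.of (φ := amalgamFamHom ι1 ι2) true (ULift.up a) := by
  simp [amalgamToPushout, AmalgamatedProduct.j1]
  rfl

theorem amalgamToPushout_j2 (b : G2) :
    amalgamToPushout ι1 ι2 (AmalgamatedProduct.j2 ι1 ι2 b) =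
      PushoutI.of (φ := amalgamFamHom ι1 ι2) false (ULift.up b) := by
  simp [amalgamToPushout, AmalgamatedProduct.j2]
  rfl

theorem j1_injective (hι1 : Function.Injective ι1) (hι2 : Function.Injective ι2) :
    Function.Injective (AmalgamatedProduct.j1 ι1 ι2) := by
  intro a b hab
  have := congrArg (amalgamToPushout ι1 ι2) hab
  rw [amalgamToPushout_j1, amalgamToPushout_j1] at this
  have := PushoutI.of_injective (amalgamFamHom_injective ι1 ι2 hι1 hι2) true this
  exact congrArg ULift.down this

theorem j1_eq_j2 (h : H) :
    AmalgamatedProduct.j1 ι1 ι2 (ι1 h) = AmalgamatedProduct.j2 ι1 ι2 (ι2 h) := by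
  have hg : Coprod.inl (ι1 h) * (Coprod.inr (ι2 h))⁻¹ ∈ amalgamKer ι1 ι2 :=
    Subgroup.subset_normalClosure ⟨h, rfl⟩
  show QuotientGroup.mk _ = QuotientGroup.mk _
  rw [QuotientGroup.eq]
  have := (amalgamKer_normal ι1 ι2).conj_mem _ ((amalgamKer ι1 ι2).inv_mem hg)
    (Coprod.inl (ι1 h))⁻¹
  simpa [mul_assoc] using this

theorem j2_eq_j1 (hι1 : Function.Injective ι1) (hι2 : Function.Injective ι2)
    {b : G2} {g : G1} (h : AmalgamatedProduct.j2 ι1 ι2 b = AmalgamatedProduct.j1 ι1 ι2 g) :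
    ∃ h0 : H, b = ι2 h0 ∧ g = ι1 h0 := by
  have hφ := amalgamFamHom_injective ι1 ι2 hι1 hι2
  have he : PushoutI.of (φ := amalgamFamHom ι1 ι2) false (ULift.up b) =
      PushoutI.of (φ := amalgamFamHom ι1 ι2) true (ULift.up g) := by
    rw [← amalgamToPushout_j1, ← amalgamToPushout_j2, h]
  have hmem : PushoutI.of (φ := amalgamFamHom ι1 ι2) true (ULift.up g) ∈
      (PushoutI.of (φ := amalgamFamHom ι1 ι2) true).range ⊓
      (PushoutI.of (φ := amalgamFamHom ι1 ι2) false).range :=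
    ⟨⟨ULift.up g, rfl⟩, ⟨ULift.up b, he⟩⟩
  rw [PushoutI.inf_of_range_eq_base_range hφ (by simp : (true : Bool) ≠ false)] at hmem
  obtain ⟨h0, hh0⟩ := hmem
  refine ⟨h0, ?_, ?_⟩
  · have h2 : PushoutI.of (φ := amalgamFamHom ι1 ι2) false (amalgamFamHom ι1 ι2 false h0) =
        PushoutI.of (φ := amalgamFamHom ι1 ι2) false (ULift.up b) := by
      rw [PushoutI.of_apply_eq_base, hh0, he]
    have h3 := PushoutI.of_injective hφ false h2
    exact (congrArg ULift.down h3).symm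
  · have h2 : PushoutI.of (φ := amalgamFamHom ι1 ι2) true (amalgamFamHom ι1 ι2 true h0) =
        PushoutI.of (φ := amalgamFamHom ι1 ι2) true (ULift.up g) := by
      rw [PushoutI.of_apply_eq_base, hh0]
    have h3 := PushoutI.of_injective hφ true h2
    exact (congrArg ULift.down h3).symm

/-- Britton's lemma in `PushoutI`: a reduced word whose product lies in the image of one
of the factors has length at most one. -/
theorem britton_length_le {ι : Type*} {G : ι → Type*} [∀ i, Group (G i)] {H' : Type*} [Group H']
    {φ : ∀ i, H' →* G i} (hφ : ∀ i, Function.Injective (φ i))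
    {w : CoprodI.Word G} (hw : PushoutI.Reduced φ w) {i : ι} {g : G i}
    (hp : PushoutI.ofCoprodI (φ := φ) w.prod = PushoutI.of (φ := φ) i g) :
    w.toList.length ≤ 1 := by
  obtain ⟨d⟩ := PushoutI.NormalWord.transversal_nonempty φ hφ
  obtain ⟨w', hw'prod, hw'map⟩ := hw.exists_normalWord_prod_eq d
  have hlen : w'.toList.length = w.toList.length := by
    have := congrArg List.length hw'map
    simpa using this
  rw [hp] at hw'prod
  by_cases hg : g ∈ (φ i).range
  · obtain ⟨h, rfl⟩ := hg
    have hne : (⟨CoprodI.Word.empty, h, by simp [CoprodI.Word.empty]⟩ :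
        PushoutI.NormalWord d).prod = PushoutI.of (φ := φ) i (φ i h) := by
      rw [PushoutI.of_apply_eq_base]
      simp [PushoutI.NormalWord.prod, CoprodI.Word.empty, CoprodI.Word.prod]
    have : w' = ⟨CoprodI.Word.empty, h, by simp [CoprodI.Word.empty]⟩ :=
      PushoutI.NormalWord.prod_injective (hw'prod.trans hne.symm)
    rw [this] at hlen
    simp [CoprodI.Word.empty] at hlen
    omega
  · have hcons : (PushoutI.NormalWord.cons (d := d) g PushoutI.NormalWord.empty
        (by simp [CoprodI.Word.fstIdx]) hg).prod = PushoutI.of (φ := φ) i g := by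
      rw [PushoutI.NormalWord.prod_cons]
      simp
    have : w' = PushoutI.NormalWord.cons (d := d) g PushoutI.NormalWord.empty
        (by simp [CoprodI.Word.fstIdx]) hg :=
      PushoutI.NormalWord.prod_injective (hw'prod.trans hcons.symm)
    rw [this] at hlen
    simp [PushoutI.NormalWord.cons, CoprodI.Word.cons] at hlen
    omega

/-! ### Blocks -/

/-- Evaluation of a block in the amalgamated product. -/
def jval : (G1 ⊕ G2) × ℕ → AmalgamatedProduct ι1 ι2 := fun p =>
  Sum.elim (AmalgamatedProduct.j1 ι1 ι2) (AmalgamatedProduct.j2 ι1 ι2) p.1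

/-- Whether a block value lies in the image of the amalgamated subgroup. -/
def InBase : G1 ⊕ G2 → Prop :=
  Sum.elim (fun a => a ∈ ι1.range) (fun b => b ∈ ι2.range)

/-- A good block: a block together with a `T`-word witness and an `S`-word witness. -/
def GoodBlk (S1 : Set G1) (S2 : Set G2) (T : Set (AmalgamatedProduct ι1 ι2)) (M : ℕ) :
    (G1 ⊕ G2) × ℕ → Prop
  | (Sum.inl a, c) =>
      (∃ tw : List (AmalgamatedProduct ι1 ι2), (∀ x ∈ tw, x ∈ T ∨ x⁻¹ ∈ T) ∧
        tw.prod = AmalgamatedProduct.j1 ι1 ι2 a ∧ tw.length ≤ c) ∧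
      (∃ sw : List G1, (∀ x ∈ sw, x ∈ S1 ∨ x⁻¹ ∈ S1) ∧ sw.prod = a ∧ sw.length ≤ M * c)
  | (Sum.inr b, c) =>
      (∃ tw : List (AmalgamatedProduct ι1 ι2), (∀ x ∈ tw, x ∈ T ∨ x⁻¹ ∈ T) ∧
        tw.prod = AmalgamatedProduct.j2 ι1 ι2 b ∧ tw.length ≤ c) ∧
      (∃ sw : List G2, (∀ x ∈ sw, x ∈ S2 ∨ x⁻¹ ∈ S2) ∧ sw.prod = b ∧ sw.length ≤ M * c)

theorem not_chain'_split {α : Type*} {R : α → α → Prop} (l : List α) (h : ¬ l.Chain' R) :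
    ∃ l1 a b l2, l = l1 ++ a :: b :: l2 ∧ ¬ R a b := by
  induction l with
  | nil => exact absurd List.isChain_nil h
  | cons a l ih =>
    cases l with
    | nil => exact absurd (List.isChain_singleton a) h
    | cons b l' =>
      rw [List.Chain', List.isChain_cons_cons] at h
      by_cases hR : R a b
      · obtain ⟨l1, x, y, l2, heq, hxy⟩ := ih (fun hc => h ⟨hR, hc⟩)
        exact ⟨a :: l1, x, y, l2, by rw [List.cons_append, ← heq], hxy⟩
      · exact ⟨[], a, b, l', rfl, hR⟩

variable {S1 : Set G1} {S2 : Set G2} {SH : Set H} {T : Set (AmalgamatedProduct ι1 ι2)} {M : ℕ}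

theorem britton_Q (hι1 : Function.Injective ι1) (hι2 : Function.Injective ι2)
    (L : List ((G1 ⊕ G2) × ℕ))
    (hch : L.Chain' fun p q => p.1.isLeft ≠ q.1.isLeft)
    (hnb : ∀ p ∈ L, ¬ InBase ι1 ι2 p.1) {g : G1}
    (hprod : (L.map (jval ι1 ι2)).prod = AmalgamatedProduct.j1 ι1 ι2 g) :
    L.length ≤ 1 := by
  classical
  have hφ := amalgamFamHom_injective ι1 ι2 hι1 hι2
  let letter : (G1 ⊕ G2) × ℕ → Σ b, AmalgamFam G1 G2 b := fun p =>
    Sum.elim (fun a => ⟨true, ULift.up a⟩) (fun b => ⟨false, ULift.up b⟩) p.1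
  have hfst : ∀ p, (letter p).1 = p.1.isLeft := by rintro ⟨(a|b), c⟩ <;> rfl
  have hne_one : ∀ l ∈ L.map letter, l.2 ≠ 1 := by
    intro l hl
    obtain ⟨p, hp, rfl⟩ := List.mem_map.1 hl
    rcases p with ⟨(a|b), c⟩
    · intro h1
      refine hnb _ hp ⟨1, ?_⟩
      have : a = 1 := congrArg ULift.down h1
      rw [map_one, this]
    · intro h1
      refine hnb _ hp ⟨1, ?_⟩
      have : b = 1 := congrArg ULift.down h1
      rw [map_one, this]
  have hchain : (L.map letter).Chain' (fun l l' => l.1 ≠ l'.1) := by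
    rw [List.Chain', List.isChain_map]
    refine hch.imp ?_
    intro p q h
    rw [hfst, hfst]
    exact h
  let w : CoprodI.Word (AmalgamFam G1 G2) := ⟨L.map letter, hne_one, hchain⟩
  have hred : PushoutI.Reduced (amalgamFamHom ι1 ι2) w := by
    intro l hl
    obtain ⟨p, hp, rfl⟩ := List.mem_map.1 hl
    rcases p with ⟨(a|b), c⟩
    · rintro ⟨h0, hh0⟩
      exact hnb _ hp ⟨h0, congrArg ULift.down hh0⟩
    · rintro ⟨h0, hh0⟩
      exact hnb _ hp ⟨h0, congrArg ULift.down hh0⟩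
  have key : ∀ L' : List ((G1 ⊕ G2) × ℕ),
      PushoutI.ofCoprodI (φ := amalgamFamHom ι1 ι2)
          (((L'.map letter).map fun l => CoprodI.of l.2).prod)
        = amalgamToPushout ι1 ι2 ((L'.map (jval ι1 ι2)).prod) := by
    intro L'
    induction L' with
    | nil => simp
    | cons p L' ih =>
      rcases p with ⟨(a|b), c⟩ <;>
        simp only [List.map_cons, List.prod_cons, map_mul, ih]
      · congr 1
      · congr 1
  have hp : PushoutI.ofCoprodI (φ := amalgamFamHom ι1 ι2) w.prod =
      PushoutI.of (φ := amalgamFamHom ι1 ι2) true (ULift.up g) := by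
    have hwp : w.prod = ((L.map letter).map fun l => CoprodI.of l.2).prod := rfl
    rw [hwp, key, hprod, amalgamToPushout_j1]
  have hlen := britton_length_le hφ hred hp
  simpa [w] using hlen

theorem goodblk_merge {p q : (G1 ⊕ G2) × ℕ}
    (hp : GoodBlk ι1 ι2 S1 S2 T M p) (hq : GoodBlk ι1 ι2 S1 S2 T M q)
    (htag : p.1.isLeft = q.1.isLeft) :
    ∃ pq, GoodBlk ι1 ι2 S1 S2 T M pq ∧
      jval ι1 ι2 pq = jval ι1 ι2 p * jval ι1 ι2 q ∧ pq.2 = p.2 + q.2 := by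
  rcases p with ⟨(a|a), c⟩ <;> rcases q with ⟨(b|b), c'⟩
  case inl.inr => exact absurd htag (by simp)
  case inr.inl => exact absurd htag (by simp)
  case inl.inl =>
    obtain ⟨⟨tw, htw, htwp, htwl⟩, ⟨sw, hsw, hswp, hswl⟩⟩ := hp
    obtain ⟨⟨tw', htw', htwp', htwl'⟩, ⟨sw', hsw', hswp', hswl'⟩⟩ := hq
    refine ⟨(Sum.inl (a * b), c + c'),
      ⟨⟨tw ++ tw', fun x hx => (List.mem_append.1 hx).elim (htw x) (htw' x), ?_, ?_⟩,
       ⟨sw ++ sw', fun x hx => (List.mem_append.1 hx).elim (hsw x) (hsw' x), ?_, ?_⟩⟩,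
      by simp [jval], rfl⟩
    · rw [List.prod_append, htwp, htwp', map_mul]
    · rw [List.length_append]; omega
    · rw [List.prod_append, hswp, hswp']
    · rw [List.length_append, Nat.mul_add]; omega
  case inr.inr =>
    obtain ⟨⟨tw, htw, htwp, htwl⟩, ⟨sw, hsw, hswp, hswl⟩⟩ := hp
    obtain ⟨⟨tw', htw', htwp', htwl'⟩, ⟨sw', hsw', hswp', hswl'⟩⟩ := hq
    refine ⟨(Sum.inr (a * b), c + c'),
      ⟨⟨tw ++ tw', fun x hx => (List.mem_append.1 hx).elim (htw x) (htw' x), ?_, ?_⟩,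
       ⟨sw ++ sw', fun x hx => (List.mem_append.1 hx).elim (hsw x) (hsw' x), ?_, ?_⟩⟩,
      by simp [jval], rfl⟩
    · rw [List.prod_append, htwp, htwp', map_mul]
    · rw [List.length_append]; omega
    · rw [List.prod_append, hswp, hswp']
    · rw [List.length_append, Nat.mul_add]; omega

theorem goodblk_flip_lr (hSHgen : Subgroup.closure SH = ⊤) (hsub2 : ι2 '' SH ⊆ S2)
    (hH : ∀ h : H, wordLength SH h ≤ M * wordLength T (AmalgamatedProduct.j1 ι1 ι2 (ι1 h)))
    {h : H} {c : ℕ} (hp : GoodBlk ι1 ι2 S1 S2 T M (Sum.inl (ι1 h), c)) :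
    GoodBlk ι1 ι2 S1 S2 T M (Sum.inr (ι2 h), c) := by
  obtain ⟨⟨tw, htw, htwp, htwl⟩, -⟩ := hp
  obtain ⟨hl, hlmem, hlprod⟩ := (exists_min_word hSHgen h).choose_spec
  set l := (exists_min_word hSHgen h).choose
  have hwl : wordLength T (AmalgamatedProduct.j1 ι1 ι2 (ι1 h)) ≤ c :=
    le_trans (wordLength_le_length htw htwp) htwl
  refine ⟨⟨tw, htw, by rw [htwp, j1_eq_j2], htwl⟩, ⟨l.map ι2, ?_, ?_, ?_⟩⟩
  · intro x hx
    obtain ⟨y, hy, rfl⟩ := List.mem_map.1 hx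
    rcases hlmem y hy with hy' | hy'
    · exact Or.inl (hsub2 ⟨y, hy', rfl⟩)
    · exact Or.inr (by rw [← map_inv]; exact hsub2 ⟨y⁻¹, hy', rfl⟩)
  · rw [← map_list_prod, hlprod]
  · rw [List.length_map, hl]
    exact le_trans (hH h) (Nat.mul_le_mul_left M hwl)

theorem goodblk_flip_rl (hSHgen : Subgroup.closure SH = ⊤) (hsub1 : ι1 '' SH ⊆ S1)
    (hH : ∀ h : H, wordLength SH h ≤ M * wordLength T (AmalgamatedProduct.j1 ι1 ι2 (ι1 h)))
    {h : H} {c : ℕ} (hp : GoodBlk ι1 ι2 S1 S2 T M (Sum.inr (ι2 h), c)) :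
    GoodBlk ι1 ι2 S1 S2 T M (Sum.inl (ι1 h), c) := by
  obtain ⟨⟨tw, htw, htwp, htwl⟩, -⟩ := hp
  obtain ⟨hl, hlmem, hlprod⟩ := (exists_min_word hSHgen h).choose_spec
  set l := (exists_min_word hSHgen h).choose
  have htwp' : tw.prod = AmalgamatedProduct.j1 ι1 ι2 (ι1 h) := by rw [htwp, j1_eq_j2]
  have hwl : wordLength T (AmalgamatedProduct.j1 ι1 ι2 (ι1 h)) ≤ c :=
    le_trans (wordLength_le_length htw htwp') htwl
  refine ⟨⟨tw, htw, htwp', htwl⟩, ⟨l.map ι1, ?_, ?_, ?_⟩⟩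
  · intro x hx
    obtain ⟨y, hy, rfl⟩ := List.mem_map.1 hx
    rcases hlmem y hy with hy' | hy'
    · exact Or.inl (hsub1 ⟨y, hy', rfl⟩)
    · exact Or.inr (by rw [← map_inv]; exact hsub1 ⟨y⁻¹, hy', rfl⟩)
  · rw [← map_list_prod, hlprod]
  · rw [List.length_map, hl]
    exact le_trans (hH h) (Nat.mul_le_mul_left M hwl)

theorem init_blocks (hM : 0 < M)
    (hT : T = AmalgamatedProduct.j1 ι1 ι2 '' S1 ∪ AmalgamatedProduct.j2 ι1 ι2 '' S2)
    (l : List (AmalgamatedProduct ι1 ι2)) (hmem : ∀ x ∈ l, x ∈ T ∨ x⁻¹ ∈ T) :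
    ∃ L : List ((G1 ⊕ G2) × ℕ), (∀ p ∈ L, GoodBlk ι1 ι2 S1 S2 T M p) ∧
      (L.map (jval ι1 ι2)).prod = l.prod ∧ (L.map Prod.snd).sum = l.length := by
  induction l with
  | nil => exact ⟨[], by simp, by simp, by simp⟩
  | cons x l ih =>
    obtain ⟨L, hL, hLp, hLs⟩ := ih (fun y hy => hmem y (List.mem_cons_of_mem _ hy))
    have hx0 := hmem x List.mem_cons_self
    have hx0' := hmem x List.mem_cons_self
    have hblk : ∃ v : G1 ⊕ G2, GoodBlk ι1 ι2 S1 S2 T M (v, 1) ∧ jval ι1 ι2 (v, 1) = x := by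
      rcases hx0' with hx1 | hx1
      · rcases hT ▸ hx1 with ⟨a, ha, rfl⟩ | ⟨b, hb, rfl⟩
        · exact ⟨Sum.inl a,
            ⟨⟨[AmalgamatedProduct.j1 ι1 ι2 a], by simpa using hx0, by simp, by simp⟩,
             ⟨[a], by simp [ha], by simp, by simp; omega⟩⟩, rfl⟩
        · exact ⟨Sum.inr b,
            ⟨⟨[AmalgamatedProduct.j2 ι1 ι2 b], by simpa using hx0, by simp, by simp⟩,
             ⟨[b], by simp [hb], by simp, by simp; omega⟩⟩, rfl⟩
      · rcases hT ▸ hx1 with ⟨a, ha, hxa⟩ | ⟨b, hb, hxb⟩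
        · have hxval : x = AmalgamatedProduct.j1 ι1 ι2 a⁻¹ := by
            rw [map_inv, hxa, inv_inv]
          exact ⟨Sum.inl a⁻¹,
            ⟨⟨[x], by simpa using hx0, by rw [List.prod_singleton, hxval], by simp⟩,
             ⟨[a⁻¹], by simp [ha], by simp, by simp; omega⟩⟩, hxval.symm⟩
        · have hxval : x = AmalgamatedProduct.j2 ι1 ι2 b⁻¹ := by
            rw [map_inv, hxb, inv_inv]
          exact ⟨Sum.inr b⁻¹,
            ⟨⟨[x], by simpa using hx0, by rw [List.prod_singleton, hxval], by simp⟩,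
             ⟨[b⁻¹], by simp [hb], by simp, by simp; omega⟩⟩, hxval.symm⟩
    obtain ⟨v, hv, hvx⟩ := hblk
    refine ⟨(v, 1) :: L, ?_, ?_, ?_⟩
    · intro p hp
      rcases List.mem_cons.1 hp with rfl | hp
      · exact hv
      · exact hL p hp
    · rw [List.map_cons, List.prod_cons, hvx, hLp, List.prod_cons]
    · simp only [List.map_cons, List.sum_cons, List.length_cons, hLs]
      omega

theorem main_induction (hι1 : Function.Injective ι1) (hι2 : Function.Injective ι2)
    (hSHgen : Subgroup.closure SH = ⊤)
    (hsub1 : ι1 '' SH ⊆ S1) (hsub2 : ι2 '' SH ⊆ S2)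
    (hH : ∀ h : H, wordLength SH h ≤ M * wordLength T (AmalgamatedProduct.j1 ι1 ι2 (ι1 h))) :
    ∀ (r : ℕ) (L : List ((G1 ⊕ G2) × ℕ)) (g : G1), L.length ≤ r →
      (∀ p ∈ L, GoodBlk ι1 ι2 S1 S2 T M p) →
      (L.map (jval ι1 ι2)).prod = AmalgamatedProduct.j1 ι1 ι2 g →
      ∃ sw : List G1, (∀ x ∈ sw, x ∈ S1 ∨ x⁻¹ ∈ S1) ∧ sw.prod = g ∧
        sw.length ≤ M * (L.map Prod.snd).sum := by
  intro r
  induction r with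
  | zero =>
    intro L g hlen hgood hprod
    rw [List.length_eq_zero_iff.1 (Nat.le_zero.1 hlen)] at hprod ⊢
    have hg : g = 1 := by
      apply j1_injective ι1 ι2 hι1 hι2
      rw [← hprod, map_one]
      simp
    exact ⟨[], by simp, by simp [hg], by simp⟩
  | succ r ih =>
    intro L g hlen hgood hprod
    match L, hlen, hgood, hprod with
    | [], _, hgood, hprod =>
      have hg : g = 1 := by
        apply j1_injective ι1 ι2 hι1 hι2
        rw [← hprod, map_one]
        simp
      exact ⟨[], by simp, by simp [hg], by simp⟩
    | [(Sum.inl a, c)], _, hgood, hprod =>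
      have ha : a = g := by
        apply j1_injective ι1 ι2 hι1 hι2
        simpa [jval] using hprod
      obtain ⟨-, sw, hsw, hswp, hswl⟩ := hgood _ (List.mem_singleton_self _)
      exact ⟨sw, hsw, by rw [hswp, ha], by simpa using hswl⟩
    | [(Sum.inr b, c)], _, hgood, hprod =>
      have hb : AmalgamatedProduct.j2 ι1 ι2 b = AmalgamatedProduct.j1 ι1 ι2 g := by
        simpa [jval] using hprod
      obtain ⟨h0, rfl, rfl⟩ := j2_eq_j1 ι1 ι2 hι1 hι2 hb
      have hflip := goodblk_flip_rl ι1 ι2 hSHgen hsub1 hH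
        (hgood _ (List.mem_singleton_self _))
      obtain ⟨-, sw, hsw, hswp, hswl⟩ := hflip
      exact ⟨sw, hsw, hswp, by simpa using hswl⟩
    | p0 :: p1 :: L', hlen, hgood, hprod =>
      by_cases hch : (p0 :: p1 :: L').Chain' fun p q => p.1.isLeft ≠ q.1.isLeft
      · -- alternating: find a block in the base
        have hbase : ∃ m ∈ p0 :: p1 :: L', InBase ι1 ι2 m.1 := by
          by_contra hno
          push_neg at hno
          have := britton_Q ι1 ι2 hι1 hι2 _ hch hno hprod
          simp at this
        obtain ⟨m, hm, hmbase⟩ := hbase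
        obtain ⟨L1, L2, hLeq⟩ := List.append_of_mem hm
        -- get the flipped block m'
        have hmgood : GoodBlk ι1 ι2 S1 S2 T M m := hgood m hm
        have hflip : ∃ m' : (G1 ⊕ G2) × ℕ, GoodBlk ι1 ι2 S1 S2 T M m' ∧
            jval ι1 ι2 m' = jval ι1 ι2 m ∧ m'.2 = m.2 ∧ m'.1.isLeft = !m.1.isLeft := by
          rcases m with ⟨(a|b), c⟩
          · obtain ⟨h0, rfl⟩ : a ∈ ι1.range := hmbase
            exact ⟨(Sum.inr (ι2 h0), c),
              goodblk_flip_lr ι1 ι2 hSHgen hsub2 hH hmgood,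
              by simp [jval, j1_eq_j2], rfl, rfl⟩
          · obtain ⟨h0, rfl⟩ : b ∈ ι2.range := hmbase
            exact ⟨(Sum.inl (ι1 h0), c),
              goodblk_flip_rl ι1 ι2 hSHgen hsub1 hH hmgood,
              by simp [jval, j1_eq_j2], rfl, rfl⟩
        obtain ⟨m', hm'good, hm'val, hm'snd, hm'tag⟩ := hflip
        rw [hLeq] at hch hgood hprod hlen
        cases L2 with
        | cons q L2' =>
          have htagmq : m.1.isLeft ≠ q.1.isLeft :=
            (List.isChain_cons_cons.1 (List.isChain_split.1 hch).2).1
          have htag' : m'.1.isLeft = q.1.isLeft := by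
            rw [hm'tag]
            revert htagmq
            cases q.1.isLeft <;> cases m.1.isLeft <;> decide
          obtain ⟨mq, hmqgood, hmqval, hmqsnd⟩ :=
            goodblk_merge ι1 ι2 hm'good (hgood q (by simp)) htag'
          have hrec := ih (L1 ++ mq :: L2') g ?_ ?_ ?_
          · obtain ⟨sw, hsw, hswp, hswl⟩ := hrec
            refine ⟨sw, hsw, hswp, le_trans hswl (le_of_eq ?_)⟩
            have heq2 : ((L1 ++ mq :: L2').map Prod.snd).sum =
                ((L1 ++ m :: q :: L2').map Prod.snd).sum := by
              simp [hmqsnd, hm'snd]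
              omega
            rw [heq2, hLeq]
          · have h1 : (L1 ++ m :: q :: L2').length ≤ r + 1 := hlen
            simp only [List.length_append, List.length_cons] at h1 ⊢
            omega
          · intro p hp
            rcases List.mem_append.1 hp with hp | hp
            · exact hgood p (List.mem_append.2 (Or.inl hp))
            · rcases List.mem_cons.1 hp with rfl | hp
              · exact hmqgood
              · exact hgood p (by simp [hp])
          · rw [← hprod]
            simp only [List.map_append, List.map_cons, List.prod_append, List.prod_cons]
            rw [hmqval, hm'val, mul_assoc]
        | nil =>
          rcases List.eq_nil_or_concat L1 with rfl | ⟨L1', q, rfl⟩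
          · have := congrArg List.length hLeq
            simp at this
          · have hL1q : L1'.concat q ++ [m] = L1' ++ q :: m :: [] := by simp
            rw [hL1q] at hch hgood hprod hlen
            have htagqm : q.1.isLeft ≠ m.1.isLeft :=
              (List.isChain_cons_cons.1 (List.isChain_split.1 hch).2).1
            have htag' : q.1.isLeft = m'.1.isLeft := by
              rw [hm'tag]
              revert htagqm
              cases q.1.isLeft <;> cases m.1.isLeft <;> decide
            obtain ⟨qm, hqmgood, hqmval, hqmsnd⟩ :=
              goodblk_merge ι1 ι2 (hgood q (by simp)) hm'good htag'
            have hrec := ih (L1' ++ [qm]) g ?_ ?_ ?_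
            · obtain ⟨sw, hsw, hswp, hswl⟩ := hrec
              refine ⟨sw, hsw, hswp, le_trans hswl (le_of_eq ?_)⟩
              have heq2 : ((L1' ++ [qm]).map Prod.snd).sum =
                  ((L1' ++ q :: m :: []).map Prod.snd).sum := by
                simp [hqmsnd, hm'snd]
              rw [hLeq, hL1q]
              exact congrArg (fun n => M * n) heq2
            · have h1 : (L1' ++ q :: m :: []).length ≤ r + 1 := hlen
              simp only [List.length_append, List.length_cons] at h1 ⊢
              omega
            · intro p hp
              rcases List.mem_append.1 hp with hp | hp
              · exact hgood p (List.mem_append.2 (Or.inl hp))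
              · rcases List.mem_cons.1 hp with rfl | hp
                · exact hqmgood
                · simp at hp
            · rw [← hprod]
              simp only [List.map_append, List.map_cons, List.map_nil, List.prod_append,
                List.prod_cons, List.prod_nil]
              rw [hqmval, hm'val]
              simp [mul_assoc]
      · -- not alternating: merge two adjacent blocks with the same tag
        obtain ⟨l1, x, y, l2, hLeq, hxy⟩ := not_chain'_split _ hch
        have htag : x.1.isLeft = y.1.isLeft := by
          by_contra hcon
          exact hxy hcon
        rw [hLeq] at hgood hprod hlen
        obtain ⟨xy, hxygood, hxyval, hxysnd⟩ :=
          goodblk_merge ι1 ι2 (hgood x (by simp)) (hgood y (by simp)) htag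
        have hrec := ih (l1 ++ xy :: l2) g ?_ ?_ ?_
        · obtain ⟨sw, hsw, hswp, hswl⟩ := hrec
          refine ⟨sw, hsw, hswp, le_trans hswl (le_of_eq ?_)⟩
          have heq2 : ((l1 ++ xy :: l2).map Prod.snd).sum =
              ((l1 ++ x :: y :: l2).map Prod.snd).sum := by
            simp [hxysnd]
            omega
          rw [heq2, hLeq]
        · have h1 : (l1 ++ x :: y :: l2).length ≤ r + 1 := hlen
          simp only [List.length_append, List.length_cons] at h1 ⊢
          omega
        · intro p hp
          rcases List.mem_append.1 hp with hp | hp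
          · exact hgood p (List.mem_append.2 (Or.inl hp))
          · rcases List.mem_cons.1 hp with rfl | hp
            · exact hxygood
            · exact hgood p (by simp [hp])
        · rw [← hprod]
          simp only [List.map_append, List.map_cons, List.prod_append, List.prod_cons]
          rw [hxyval, mul_assoc]

end Aux

theorem amalgam_factor_undistorted
    {G1 G2 H : Type*} [Group G1] [Group G2] [Group H]
    (S1 : Set G1) (hS1fin : S1.Finite) (hS1gen : Subgroup.closure S1 = ⊤)
    (S2 : Set G2) (hS2fin : S2.Finite) (hS2gen : Subgroup.closure S2 = ⊤)
    (SH : Set H) (hSHfin : SH.Finite) (hSHgen : Subgroup.closure SH = ⊤)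
    (ι1 : H →* G1) (ι2 : H →* G2)
    (hι1 : Function.Injective ι1) (hι2 : Function.Injective ι2)
    (hsub1 : ι1 '' SH ⊆ S1) (hsub2 : ι2 '' SH ⊆ S2)
    (T : Set (AmalgamatedProduct ι1 ι2))
    (hT : T = AmalgamatedProduct.j1 ι1 ι2 '' S1 ∪ AmalgamatedProduct.j2 ι1 ι2 '' S2)
    (M : ℕ) (hM : 0 < M)
    (hH : ∀ h : H, wordLength SH h ≤ M * wordLength T (AmalgamatedProduct.j1 ι1 ι2 (ι1 h))) :
    (∃ M' : ℕ, ∀ g : G1,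
        wordLength S1 g ≤ M' * wordLength T (AmalgamatedProduct.j1 ι1 ι2 g)) ∧
    ∃ M'' : ℕ, ∀ g : G1,
      wordLength S1 g ≤ M'' * wordLength T (AmalgamatedProduct.j1 ι1 ι2 g) + M'' := by
  have hTgen : Subgroup.closure T = ⊤ := by
    rw [hT, Subgroup.closure_union, ← MonoidHom.map_closure, ← MonoidHom.map_closure,
      hS1gen, hS2gen, ← MonoidHom.range_eq_map, ← MonoidHom.range_eq_map,
      AmalgamatedProduct.j1, AmalgamatedProduct.j2, MonoidHom.range_comp,
      MonoidHom.range_comp, ← Subgroup.map_sup, Coprod.range_inl_sup_range_inr]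
    exact Subgroup.map_top_of_surjective _ (QuotientGroup.mk'_surjective _)
  have hmain : ∀ g : G1, wordLength S1 g ≤ M * wordLength T (AmalgamatedProduct.j1 ι1 ι2 g) := by
    intro g
    obtain ⟨hl, hlmem, hlprod⟩ :=
      (exists_min_word hTgen (AmalgamatedProduct.j1 ι1 ι2 g)).choose_spec
    set l := (exists_min_word hTgen (AmalgamatedProduct.j1 ι1 ι2 g)).choose
    obtain ⟨L, hLgood, hLprod, hLsum⟩ :=
      init_blocks ι1 ι2 (S1 := S1) (S2 := S2) hM hT l hlmem
    obtain ⟨sw, hsw, hswprod, hswlen⟩ :=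
      main_induction ι1 ι2 hι1 hι2 hSHgen hsub1 hsub2 hH L.length L g le_rfl hLgood
        (hLprod.trans hlprod)
    calc wordLength S1 g ≤ sw.length := wordLength_le_length hsw hswprod
      _ ≤ M * (L.map Prod.snd).sum := hswlen
      _ = M * l.length := by rw [hLsum]
      _ = M * wordLength T (AmalgamatedProduct.j1 ι1 ι2 g) := by rw [hl]
  exact ⟨⟨M, hmain⟩, ⟨M, fun g => le_trans (hmain g) (Nat.le_add_right _ _)⟩⟩
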